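/- Let T be a tree on n vertices and let m < n be a positive integer. Then there exists a vertex v of T such that, letting C₁,...,C_s be those connected components of T − v all of whose vertices are at distance at most m from v (in T), the total number of vertices in these components is at least m. -/

import Mathlib

open SimpleGraph

lemma walk_split {V : Type*} {G : SimpleGraph V} :
    ∀ {u w : V} (p : G.Walk u w) (i : ℕ), i ≤ p.length →
      ∃ (q : G.Walk u (p.getVert i)) (r : G.Walk (p.getVert i) w),
        q.length = i ∧ r.length = p.length - i ∧ q.append r = p := by
  intro u w p
  induction p with
  | nil =>
    intro i hi
    simp only [Walk.length_nil, Nat.le_zero] at hi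
    subst hi
    exact ⟨.nil, .nil, rfl, rfl, rfl⟩
  | cons h p' ih =>
    intro i hi
    cases i with
    | zero => exact ⟨.nil, .cons h p', rfl, (Nat.sub_zero _).symm, rfl⟩
    | succ j =>
      obtain ⟨q, r, hq, hr, hqr⟩ := ih j (by simpa using hi)
      exact ⟨.cons h q, r, by simp [hq], by simp [hr], by simp [hqr]⟩

theorem stmt6 {V : Type*} [Fintype V] (G : SimpleGraph V) (hT : G.IsTree)
    (n m : ℕ) (hn : Fintype.card V = n) (hm : 0 < m) (hmn : m < n) :
    -- there is a vertex v such that the components of T - v all of whose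
    -- vertices are at distance at most m from v contain at least m vertices in total
    ∃ v : V, m ≤ Set.ncard {u : V | ∃ h : u ≠ v,
      ∀ w : ({x : V | x ≠ v} : Set V),
        (G.induce {x : V | x ≠ v}).Reachable ⟨u, h⟩ w → G.dist v (w : V) ≤ m} := by
  classical
  have hconn : G.Connected := hT.isConnected
  have hV : Nonempty V := by
    rw [← Fintype.card_pos_iff, hn]; omega
  -- pick u w maximizing distance
  obtain ⟨uw, -, hmax⟩ := Finset.exists_max_image (Finset.univ : Finset (V × V))
    (fun p => G.dist p.1 p.2) ⟨(Classical.arbitrary V, Classical.arbitrary V), by simp⟩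
  obtain ⟨u, w⟩ := uw
  set d := G.dist u w with hd
  have hmax' : ∀ a b : V, G.dist a b ≤ d := fun a b => hmax (a, b) (by simp)
  by_cases hdm : d ≤ m
  · -- all distances at most m : any v works
    obtain ⟨v⟩ := hV
    refine ⟨v, ?_⟩
    have hsub : {v}ᶜ ⊆ {u : V | ∃ h : u ≠ v,
        ∀ w : ({x : V | x ≠ v} : Set V),
          (G.induce {x : V | x ≠ v}).Reachable ⟨u, h⟩ w → G.dist v (w : V) ≤ m} := by
      intro x hx
      exact ⟨hx, fun w' _ => le_trans (le_trans (hmax' v w') (le_refl d)) hdm⟩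
    have h1 : ({v} : Set V).ncard + ({v} : Set V)ᶜ.ncard = Nat.card V :=
      Set.ncard_add_ncard_compl _
    have h2 : ({v} : Set V).ncard = 1 := Set.ncard_singleton v
    have h3 : Nat.card V = n := by rw [Nat.card_eq_fintype_card, hn]
    have := Set.ncard_le_ncard hsub (Set.toFinite _)
    omega
  · -- m < d; take a shortest path from u to w
    push_neg at hdm
    obtain ⟨p0, hp0⟩ := hconn.exists_walk_length_eq_dist u w
    set q : G.Walk u w := p0.bypass with hqdef
    have hqpath : q.IsPath := p0.bypass_isPath
    have hqlen : q.length = d := le_antisymm (le_trans p0.length_bypass_le (le_of_eq hp0)) (G.dist_le q)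
    -- distances along the shortest path
    have hkey : ∀ i, i ≤ q.length → G.dist u (q.getVert i) = i ∧
        G.dist (q.getVert i) w = d - i := by
      intro i hi
      obtain ⟨q1, r1, hq1, hr1, -⟩ := walk_split q i hi
      have h1 : G.dist u (q.getVert i) ≤ i := le_trans (G.dist_le q1) (le_of_eq hq1)
      have h2 : G.dist (q.getVert i) w ≤ d - i := by
        have := G.dist_le r1
        omega
      have h3 : d ≤ G.dist u (q.getVert i) + G.dist (q.getVert i) w :=
        hconn.dist_triangle
      constructor <;> omega
    set v : V := q.getVert m with hv
    have hmlen : m ≤ q.length := by omega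
    have hduv : G.dist u v = m := (hkey m hmlen).1
    have hdvw : G.dist v w = d - m := (hkey m hmlen).2
    have hne : ∀ i, i < m → q.getVert i ≠ v := by
      intro i hi heq
      have := (hkey i (by omega)).1
      rw [heq, hduv] at this
      omega
    have hu : u ≠ v := by
      have := hne 0 hm
      rwa [Walk.getVert_zero] at this
    set s : Set V := {x : V | x ≠ v} with hs
    -- reachability along the path within the induced graph
    have hreach : ∀ i (hi : i < m),
        (G.induce s).Reachable ⟨u, hu⟩ ⟨q.getVert i, hne i hi⟩ := by
      intro i
      induction i with
      | zero =>
        intro _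
        have : (⟨u, hu⟩ : s) = ⟨q.getVert 0, hne 0 hm⟩ :=
          Subtype.ext (q.getVert_zero).symm
        rw [this]
      | succ j ih =>
        intro hj
        refine (ih (by omega)).trans (Adj.reachable ?_)
        show G.Adj (q.getVert j) (q.getVert (j + 1))
        exact q.adj_getVert_succ (by omega)
    -- the main claim: each getVert i, i < m, is in the set
    have hmem : ∀ i, i < m → q.getVert i ∈ {u' : V | ∃ h : u' ≠ v,
        ∀ w' : ({x : V | x ≠ v} : Set V),
          (G.induce {x : V | x ≠ v}).Reachable ⟨u', h⟩ w' → G.dist v (w' : V) ≤ m} := by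
      intro i hi
      refine ⟨hne i hi, ?_⟩
      intro w' hrw
      have hruw : (G.induce s).Reachable ⟨u, hu⟩ w' := (hreach i hi).trans hrw
      -- map a walk in the induced graph to a walk in G avoiding v
      obtain ⟨W0⟩ := hruw
      set f : G.induce s →g G := (SimpleGraph.Embedding.induce s).toHom with hf
      set W : G.Walk u (w' : V) := W0.map f with hW
      have hWv : v ∉ W.support := by
        erw [hW, Walk.support_map]
        intro hvmem
        obtain ⟨x, -, hx⟩ := List.mem_map.mp hvmem
        exact x.2 hx
      -- a path from w' to w of length ≤ d
      obtain ⟨r0, hr0⟩ := hconn.exists_walk_length_eq_dist (w' : V) w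
      set r : G.Walk (w' : V) w := r0.bypass with hrdef
      have hrpath : r.IsPath := r0.bypass_isPath
      have hrlen : r.length ≤ d := le_trans (le_trans r0.length_bypass_le (le_of_eq hr0))
        (hmax' _ _)
      have hvr : v ∈ r.support := by
        by_contra hvr
        set pb : G.Walk u w := (W.append r).bypass with hpb
        have hpbv : v ∉ pb.support := by
          intro hmem'
          have := (W.append r).support_bypass_subset hmem'
          rw [Walk.mem_support_append_iff] at this
          exact this.elim hWv hvr
        have : (⟨pb, (W.append r).bypass_isPath⟩ : G.Path u w) = ⟨q, hqpath⟩ :=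
          hT.IsAcyclic.path_unique _ _
        have hpbq : pb = q := congrArg Subtype.val this
        apply hpbv
        rw [hpbq]
        obtain ⟨q1, r1, -, -, hqr⟩ := walk_split q m hmlen
        rw [← hqr, Walk.mem_support_append_iff]
        exact Or.inr r1.start_mem_support
      -- split r at v
      have hlsum : (r.takeUntil v hvr).length + (r.dropUntil v hvr).length = r.length := by
        have := congrArg Walk.length (r.take_spec hvr)
        rwa [Walk.length_append] at this
      have h1 : G.dist (w' : V) v ≤ (r.takeUntil v hvr).length := G.dist_le _
      have h2 : G.dist v w ≤ (r.dropUntil v hvr).length := G.dist_le _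
      have := G.dist_comm (u := v) (v := (w' : V))
      omega
    -- conclude the cardinality bound
    refine ⟨v, ?_⟩
    have hsub : (fun i => q.getVert i) '' ↑(Finset.range m) ⊆ {u' : V | ∃ h : u' ≠ v,
        ∀ w' : ({x : V | x ≠ v} : Set V),
          (G.induce {x : V | x ≠ v}).Reachable ⟨u', h⟩ w' → G.dist v (w' : V) ≤ m} := by
      rintro x ⟨i, hi, rfl⟩
      exact hmem i (by simpa using hi)
    have hinj : Set.InjOn (fun i => q.getVert i) ↑(Finset.range m) := by
      intro a ha b hb hab
      simp only [Finset.coe_range, Set.mem_Iio] at ha hb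
      have h1 := (hkey a (by omega)).1
      have h2 := (hkey b (by omega)).1
      simp only at hab
      rw [hab] at h1
      omega
    have hcard : ((fun i => q.getVert i) '' ↑(Finset.range m)).ncard = m := by
      rw [Set.ncard_image_of_injOn hinj, Set.ncard_coe_finset, Finset.card_range]
    calc m = _ := hcard.symm
    _ ≤ _ := Set.ncard_le_ncard hsub (Set.toFinite _)
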